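/- arXiv:1111.1991 — 3 statements merged into one kernel-verified Lean document; each statement's English description precedes it below -/
import Mathlib

section
/- For every ρ > 1, the convex hull of R_∞(ρ, 2π/3) equals the convex hull of the four points v₁ = 1/(ρ−1), v₂ = e^{−2πi/3}/(ρ−1), v₃ = e^{−2πi/3}/ρ + e^{−4πi/3}/(ρ(ρ−1)), v₄ = e^{−4πi/3}/(ρ(ρ−1)). -/
open Real

noncomputable def zet : ℂ := Complex.exp (-Complex.I * ((2 * π / 3 : ℝ) : ℂ))

lemma zet_pow_three : zet ^ 3 = 1 := by
  rw [zet, ← Complex.exp_nat_mul]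
  rw [show ((3:ℕ):ℂ) * (-Complex.I * ((2 * π / 3 : ℝ) : ℂ)) = -(2*π*Complex.I) by
    push_cast; ring]
  rw [Complex.exp_neg, Complex.exp_two_pi_mul_I, inv_one]

lemma zet_ne_one : zet ≠ 1 := by
  rw [zet]
  intro h
  rw [Complex.exp_eq_one_iff] at h
  obtain ⟨n, hn⟩ := h
  have him := congrArg Complex.im hn
  simp [Complex.mul_im, Complex.mul_re] at him
  have hπ := Real.pi_pos
  have h3 : (3 * (n:ℝ) + 1) * (2 * π) = 0 := by linarith [him]
  have h4 : (3 * (n:ℝ) + 1) = 0 := by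
    rcases mul_eq_zero.1 h3 with h | h
    · exact h
    · linarith
  have h5 : (3 * n + 1 : ℤ) = 0 := by exact_mod_cast (by push_cast; linarith : ((3 * n + 1 : ℤ) : ℝ) = 0)
  omega

lemma zet_sum : 1 + zet + zet ^ 2 = 0 := by
  have h3 : zet ^ 3 = 1 := zet_pow_three
  have h : (zet - 1) * (1 + zet + zet ^ 2) = 0 := by linear_combination h3
  rcases mul_eq_zero.1 h with h | h
  · exact absurd (sub_eq_zero.1 h) zet_ne_one
  · exact h

lemma zet_sq : Complex.exp (-Complex.I * ((4 * π / 3 : ℝ) : ℂ)) = zet ^ 2 := by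
  rw [zet, ← Complex.exp_nat_mul]
  congr 1
  push_cast
  ring

lemma norm_zet : ‖zet‖ = 1 := by
  rw [zet, Complex.norm_exp]
  simp [Complex.mul_re]

noncomputable def Rinf (ρ ω : ℝ) : Set ℂ :=
  {z | ∃ u v : ℕ → ℝ, (∀ j, u j = 0 ∨ u j = 1) ∧ (∀ j, v j = 0 ∨ v j = 1) ∧
    z = ∑' j : ℕ,
      ((u (j + 1) / ρ ^ (j + 1) : ℝ) : ℂ) *
        Complex.exp (-Complex.I * ((ω * ∑ n ∈ Finset.range (j + 1), v (n + 1) : ℝ) : ℂ))}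

lemma exp_omega_nat (m : ℕ) :
    Complex.exp (-Complex.I * ((2 * π / 3 * m : ℝ) : ℂ)) = zet ^ m := by
  rw [zet, ← Complex.exp_nat_mul]
  congr 1
  push_cast
  ring

section hard
variable {ρ : ℝ} (f : ℂ →L[ℝ] ℝ)

/-- the linear functional evaluated on powers of ζ -/
noncomputable def cc (f : ℂ →L[ℝ] ℝ) : ℕ → ℝ := fun m => f (zet ^ m)

lemma cc_per (m : ℕ) : cc f (m + 3) = cc f m := by
  unfold cc
  rw [pow_add, zet_pow_three, mul_one]

lemma cc_sum (m : ℕ) : cc f m + cc f (m+1) + cc f (m+2) = 0 := by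
  unfold cc
  rw [← map_add, ← map_add]
  have h : zet ^ m + zet ^ (m+1) + zet ^ (m+2) = 0 := by
    have : zet ^ m + zet ^ (m+1) + zet ^ (m+2) = zet ^ m * (1 + zet + zet ^ 2) := by ring
    rw [this, zet_sum, mul_zero]
  rw [h, map_zero]

lemma cc_abs (m : ℕ) : |cc f m| ≤ ‖f‖ := by
  calc |cc f m| ≤ ‖f‖ * ‖zet ^ m‖ := f.le_opNorm _
    _ = ‖f‖ := by rw [norm_pow, norm_zet, one_pow, mul_one]

/-- the DP value function (times ρ(ρ-1)) -/
noncomputable def NN (ρ : ℝ) (f : ℂ →L[ℝ] ℝ) : ℕ → ℝ := fun k =>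
  max (max (ρ * cc f k) (ρ * cc f (k+1)))
    (max ((ρ-1) * cc f (k+1) + cc f (k+2)) (cc f (k+2)))

lemma NN_A (k : ℕ) : ρ * cc f k ≤ NN ρ f k := le_trans (le_max_left _ _) (le_max_left _ _)
lemma NN_B (k : ℕ) : ρ * cc f (k+1) ≤ NN ρ f k := le_trans (le_max_right _ _) (le_max_left _ _)
lemma NN_C (k : ℕ) : (ρ-1) * cc f (k+1) + cc f (k+2) ≤ NN ρ f k :=
  le_trans (le_max_left _ _) (le_max_right _ _)
lemma NN_D (k : ℕ) : cc f (k+2) ≤ NN ρ f k := le_trans (le_max_right _ _) (le_max_right _ _)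

lemma NN_nonneg (hρ : 1 < ρ) (k : ℕ) : 0 ≤ NN ρ f k := by
  by_contra h
  push_neg at h
  have h0 : ρ * cc f k < 0 := lt_of_le_of_lt (NN_A f k) h
  have h1 : ρ * cc f (k+1) < 0 := lt_of_le_of_lt (NN_B f k) h
  have h2 : cc f (k+2) < 0 := lt_of_le_of_lt (NN_D f k) h
  have hs := cc_sum f k
  have hρ0 : 0 < ρ := by linarith
  nlinarith

lemma NN_step (hρ : 1 < ρ) (k s : ℕ) (hs : s = k ∨ s = k + 1) (u : ℝ) (hu : u = 0 ∨ u = 1) :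
    u * cc f s * (ρ * (ρ - 1)) + NN ρ f s ≤ ρ * NN ρ f k := by
  have hρ0 : (0:ℝ) < ρ := by linarith
  have hρ1 : (0:ℝ) < ρ - 1 := by linarith
  have hP := NN_nonneg f hρ k
  have hA := NN_A (ρ := ρ) f k
  have hB := NN_B (ρ := ρ) f k
  have hC := NN_C (ρ := ρ) f k
  have hD := NN_D (ρ := ρ) f k
  have hS := cc_sum f k
  rcases hs with h | h
  · rw [h]
    rcases hu with rfl | rfl
    · nlinarith [mul_nonneg hρ1.le hP]
    · nlinarith [mul_le_mul_of_nonneg_left hA hρ1.le]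
  · rw [h]
    have hgoal : NN ρ f (k+1) ≤ ρ * NN ρ f k - u * cc f (k+1) * (ρ * (ρ - 1)) := by
      have hper : cc f (k+1+2) = cc f k := by
        rw [show k+1+2 = k+3 by ring, cc_per]
      have h11 : k+1+1 = k+2 := by ring
      apply max_le (max_le ?_ ?_) (max_le ?_ ?_)
      · rcases hu with rfl | rfl
        · nlinarith [mul_nonneg hρ1.le hP]
        · nlinarith [mul_le_mul_of_nonneg_left hB hρ0.le]
      · rw [h11]
        rcases hu with rfl | rfl
        · nlinarith [mul_le_mul_of_nonneg_left hD hρ0.le]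
        · nlinarith [mul_le_mul_of_nonneg_left hC hρ0.le]
      · rw [h11, hper]
        rcases hu with rfl | rfl
        · nlinarith [mul_le_mul_of_nonneg_left hD (mul_nonneg hρ0.le hρ1.le), hA,
            mul_nonneg hρ1.le hP, hρ0]
        · nlinarith [mul_le_mul_of_nonneg_left hC (mul_nonneg hρ0.le hρ1.le), hA,
            mul_le_mul_of_nonneg_left hB hρ1.le, hρ0, mul_nonneg hρ1.le hP]
      · rw [hper]
        rcases hu with rfl | rfl
        · nlinarith [hA, mul_nonneg hρ1.le hP, hρ0, mul_nonneg (mul_nonneg hρ0.le hρ1.le) hP]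
        · nlinarith [mul_le_mul_of_nonneg_left hB (mul_nonneg hρ0.le hρ1.le), hA,
            mul_nonneg hρ1.le hP, hρ0]
    linarith
end hard

variable {ρ : ℝ}

lemma norm_inv_lt (hρ : 1 < ρ) : ‖((ρ:ℂ))⁻¹‖ < 1 := by
  rw [norm_inv, Complex.norm_real, inv_lt_one_iff₀]
  right
  simpa [abs_of_pos (by linarith : (0:ℝ) < ρ)] using hρ


lemma summable_invpow (hρ : 1 < ρ) : Summable (fun j : ℕ => ((ρ:ℂ))⁻¹ ^ (j+1)) :=
  (summable_geometric_of_norm_lt_one (norm_inv_lt hρ)).comp_injective (add_left_injective 1)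


lemma rC_ne (hρ : 1 < ρ) : (ρ:ℂ) ≠ 0 := by
  exact_mod_cast (by positivity : (ρ:ℝ) ≠ 0)


lemma rC1_ne (hρ : 1 < ρ) : (ρ:ℂ) - 1 ≠ 0 := by
  have h : ((ρ - 1 : ℝ):ℂ) ≠ 0 := by
    exact_mod_cast sub_ne_zero.2 (by linarith : ρ ≠ 1)
  push_cast at h; exact h


lemma tsum_invpow (hρ : 1 < ρ) : ∑' j : ℕ, ((ρ:ℂ))⁻¹ ^ (j+1) = ((ρ:ℂ) - 1)⁻¹ := by
  calc ∑' j : ℕ, ((ρ:ℂ))⁻¹ ^ (j+1) = ∑' j : ℕ, (ρ:ℂ)⁻¹ * ((ρ:ℂ))⁻¹ ^ j := by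
        apply tsum_congr; intro j; rw [pow_succ']
    _ = (ρ:ℂ)⁻¹ * (1 - (ρ:ℂ)⁻¹)⁻¹ := by
        rw [tsum_mul_left, tsum_geometric_of_norm_lt_one (norm_inv_lt hρ)]
    _ = ((ρ:ℂ) - 1)⁻¹ := by
        have := rC_ne hρ; have := rC1_ne hρ; field_simp


lemma mem_v1 (hρ : 1 < ρ) : (((1 / (ρ - 1) : ℝ) : ℂ)) ∈ Rinf ρ (2 * π / 3) := by
  refine ⟨fun _ => 1, fun _ => 0, fun j => Or.inr rfl, fun j => Or.inl rfl, ?_⟩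
  have : ∀ j : ℕ, ((1 / ρ ^ (j + 1) : ℝ) : ℂ) *
      Complex.exp (-Complex.I * ((2 * π / 3 * ∑ n ∈ Finset.range (j + 1), (0:ℝ) : ℝ) : ℂ))
      = ((ρ:ℂ))⁻¹ ^ (j+1) := by
    intro j
    rw [Finset.sum_const, smul_zero]
    simp only [mul_zero, Complex.ofReal_zero, neg_mul, neg_zero, Complex.exp_zero, mul_one]
    push_cast
    rw [one_div, inv_pow]
  rw [tsum_congr this, tsum_invpow hρ]
  push_cast
  ring


lemma mem_v2 (hρ : 1 < ρ) : zet / ((ρ - 1 : ℝ) : ℂ) ∈ Rinf ρ (2 * π / 3) := by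
  refine ⟨fun _ => 1, fun n => if n = 1 then 1 else 0, fun j => Or.inr rfl,
    fun j => by by_cases h : j = 1 <;> simp [h], ?_⟩
  have key : ∀ j : ℕ, ((1 / ρ ^ (j + 1) : ℝ) : ℂ) *
      Complex.exp (-Complex.I * ((2 * π / 3 *
        ∑ n ∈ Finset.range (j + 1), (if n + 1 = 1 then (1:ℝ) else 0) : ℝ) : ℂ))
      = ((ρ:ℂ))⁻¹ ^ (j+1) * zet := by
    intro j
    have hs : ∑ n ∈ Finset.range (j + 1), (if n + 1 = 1 then (1:ℝ) else 0) = 1 := by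
      simp [Finset.sum_ite_eq']
    rw [hs, mul_one, zet]
    push_cast
    rw [one_div, inv_pow]
  rw [tsum_congr key, tsum_mul_right, tsum_invpow hρ]
  push_cast
  ring


lemma sum_two_ones : ∀ j : ℕ, ∑ n ∈ Finset.range (j + 1), (if n + 1 ≤ 2 then (1:ℝ) else 0)
    = if j = 0 then 1 else 2 := by
  intro j
  induction j with
  | zero => rw [Finset.sum_range_one]; norm_num
  | succ k ih =>
    rw [Finset.sum_range_succ, ih]
    cases k with
    | zero => norm_num
    | succ m => simp


lemma summable_single {a : ℂ} : Summable (fun j : ℕ => if j = 0 then a else 0) :=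
  summable_of_ne_finset_zero (s := {0}) (by intro b hb; simp at hb; simp [hb])


lemma tsum_single {a : ℂ} : ∑' j : ℕ, (if j = 0 then a else 0) = a := by
  rw [tsum_eq_single 0 (fun b hb => by simp [hb])]
  simp


lemma mem_v3 (hρ : 1 < ρ) :
    zet / (ρ : ℂ) + Complex.exp (-Complex.I * ((4 * π / 3 : ℝ) : ℂ)) / ((ρ * (ρ - 1) : ℝ) : ℂ)
      ∈ Rinf ρ (2 * π / 3) := by
  refine ⟨fun _ => 1, fun n => if n ≤ 2 then 1 else 0, fun j => Or.inr rfl,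
    fun j => by by_cases h : j ≤ 2 <;> simp [h], ?_⟩
  have key : ∀ j : ℕ, ((1 / ρ ^ (j + 1) : ℝ) : ℂ) *
      Complex.exp (-Complex.I * ((2 * π / 3 *
        ∑ n ∈ Finset.range (j + 1), (if n + 1 ≤ 2 then (1:ℝ) else 0) : ℝ) : ℂ))
      = ((ρ:ℂ))⁻¹ ^ (j+1) * zet ^ 2 + (if j = 0 then (ρ:ℂ)⁻¹ * (zet - zet ^ 2) else 0) := by
    intro j
    rw [sum_two_ones j]
    cases j with
    | zero =>
      simp only [if_pos rfl, mul_one]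
      rw [zet]
      push_cast
      ring
    | succ k =>
      simp only [Nat.succ_ne_zero, if_false, add_zero]
      have h2 : Complex.exp (-Complex.I * ((2 * π / 3 * (2:ℝ) : ℝ) : ℂ)) = zet ^ 2 := by
        rw [zet, ← Complex.exp_nat_mul]; congr 1; push_cast; ring
      rw [h2]
      push_cast
      rw [one_div, inv_pow]
  rw [tsum_congr key, Summable.tsum_add ((summable_invpow hρ).mul_right _) summable_single,
    tsum_mul_right, tsum_invpow hρ, tsum_single, zet_sq]
  have h0 := rC_ne hρ
  have h1 := rC1_ne hρ
  push_cast
  field_simp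
  ring


lemma mem_v4 (hρ : 1 < ρ) :
    Complex.exp (-Complex.I * ((4 * π / 3 : ℝ) : ℂ)) / ((ρ * (ρ - 1) : ℝ) : ℂ)
      ∈ Rinf ρ (2 * π / 3) := by
  refine ⟨fun j => if j = 1 then 0 else 1, fun n => if n ≤ 2 then 1 else 0,
    fun j => by by_cases h : j = 1 <;> simp [h],
    fun j => by by_cases h : j ≤ 2 <;> simp [h], ?_⟩
  have key : ∀ j : ℕ, (((if j + 1 = 1 then (0:ℝ) else 1) / ρ ^ (j + 1) : ℝ) : ℂ) *
      Complex.exp (-Complex.I * ((2 * π / 3 *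
        ∑ n ∈ Finset.range (j + 1), (if n + 1 ≤ 2 then (1:ℝ) else 0) : ℝ) : ℂ))
      = ((ρ:ℂ))⁻¹ ^ (j+1) * zet ^ 2 + (if j = 0 then -((ρ:ℂ)⁻¹ * zet ^ 2) else 0) := by
    intro j
    rw [sum_two_ones j]
    cases j with
    | zero =>
      simp
    | succ k =>
      simp only [Nat.succ_ne_zero, if_false, add_zero, Nat.add_eq_right, one_ne_zero]
      have h2 : Complex.exp (-Complex.I * ((2 * π / 3 * (2:ℝ) : ℝ) : ℂ)) = zet ^ 2 := by
        rw [zet, ← Complex.exp_nat_mul]; congr 1; push_cast; ring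
      rw [h2]
      push_cast
      rw [one_div, inv_pow]
  rw [tsum_congr key, Summable.tsum_add ((summable_invpow hρ).mul_right _) summable_single,
    tsum_mul_right, tsum_invpow hρ, tsum_single, zet_sq]
  have h0 := rC_ne hρ
  have h1 := rC1_ne hρ
  push_cast
  field_simp
  ring

section main
variable {ρ : ℝ}

noncomputable def wNat (v : ℕ → ℝ) : ℕ → ℕ := fun n => if v n = 1 then 1 else 0

noncomputable def KK (v : ℕ → ℝ) : ℕ → ℕ := fun j => ∑ n ∈ Finset.range j, wNat v (n+1)

lemma KK_zero (v : ℕ → ℝ) : KK v 0 = 0 := by simp [KK]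

lemma KK_succ (v : ℕ → ℝ) (j : ℕ) : KK v (j+1) = KK v j + wNat v (j+1) :=
  Finset.sum_range_succ _ _

lemma wNat_01 (v : ℕ → ℝ) (n : ℕ) : wNat v n = 0 ∨ wNat v n = 1 := by
  by_cases h : v n = 1 <;> simp [wNat, h]

lemma v_eq_wNat {v : ℕ → ℝ} (hv : ∀ j, v j = 0 ∨ v j = 1) (n : ℕ) :
    v n = (wNat v n : ℝ) := by
  rcases hv n with h | h <;> simp [wNat, h]

lemma subset_hull (hρ : 1 < ρ) :
    Rinf ρ (2 * π / 3) ⊆ convexHull ℝ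
      ({((1 / (ρ - 1) : ℝ) : ℂ),
        Complex.exp (-Complex.I * ((2 * π / 3 : ℝ) : ℂ)) / ((ρ - 1 : ℝ) : ℂ),
        Complex.exp (-Complex.I * ((2 * π / 3 : ℝ) : ℂ)) / (ρ : ℂ) +
          Complex.exp (-Complex.I * ((4 * π / 3 : ℝ) : ℂ)) / ((ρ * (ρ - 1) : ℝ) : ℂ),
        Complex.exp (-Complex.I * ((4 * π / 3 : ℝ) : ℂ)) / ((ρ * (ρ - 1) : ℝ) : ℂ)} : Set ℂ) := by
  have hρ0 : (0:ℝ) < ρ := by linarith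
  have hρ1 : (0:ℝ) < ρ - 1 := by linarith
  have hd : (0:ℝ) < ρ * (ρ - 1) := mul_pos hρ0 hρ1
  intro z hz
  obtain ⟨u, v, hu, hv, hzeq⟩ := hz
  by_contra hc
  have hfin : ({((1 / (ρ - 1) : ℝ) : ℂ),
        Complex.exp (-Complex.I * ((2 * π / 3 : ℝ) : ℂ)) / ((ρ - 1 : ℝ) : ℂ),
        Complex.exp (-Complex.I * ((2 * π / 3 : ℝ) : ℂ)) / (ρ : ℂ) +
          Complex.exp (-Complex.I * ((4 * π / 3 : ℝ) : ℂ)) / ((ρ * (ρ - 1) : ℝ) : ℂ),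
        Complex.exp (-Complex.I * ((4 * π / 3 : ℝ) : ℂ)) / ((ρ * (ρ - 1) : ℝ) : ℂ)} : Set ℂ).Finite := by
    apply Set.Finite.insert
    apply Set.Finite.insert
    apply Set.Finite.insert
    exact Set.finite_singleton _
  obtain ⟨f, t, hft, htz⟩ := geometric_hahn_banach_closed_point
    (convex_convexHull ℝ _) (hfin.isClosed_convexHull (𝕜 := ℝ)) hc
  -- the four separation inequalities
  have hm1 := hft _ (subset_convexHull ℝ _ (Set.mem_insert _ _))
  have hm2 := hft _ (subset_convexHull ℝ _
    (Set.mem_insert_of_mem _ (Set.mem_insert _ _)))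
  have hm3 := hft _ (subset_convexHull ℝ _
    (Set.mem_insert_of_mem _ (Set.mem_insert_of_mem _ (Set.mem_insert _ _))))
  have hm4 := hft _ (subset_convexHull ℝ _
    (Set.mem_insert_of_mem _ (Set.mem_insert_of_mem _
      (Set.mem_insert_of_mem _ (Set.mem_singleton _)))))
  -- compute f on the four vertices
  have hc0 : cc f 0 = f 1 := by unfold cc; rw [pow_zero]
  have e1 : f (((1 / (ρ - 1) : ℝ) : ℂ)) * (ρ * (ρ - 1)) = ρ * cc f 0 := by
    have : (((1 / (ρ - 1) : ℝ) : ℂ)) = (1 / (ρ - 1) : ℝ) • (1:ℂ) := by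
      rw [Complex.real_smul, mul_one]
    rw [this, map_smul, smul_eq_mul, hc0]
    field_simp
  have e2 : f (Complex.exp (-Complex.I * ((2 * π / 3 : ℝ) : ℂ)) / ((ρ - 1 : ℝ) : ℂ))
      * (ρ * (ρ - 1)) = ρ * cc f 1 := by
    have : Complex.exp (-Complex.I * ((2 * π / 3 : ℝ) : ℂ)) / ((ρ - 1 : ℝ) : ℂ)
        = (1 / (ρ - 1) : ℝ) • zet := by
      rw [Complex.real_smul, zet]
      push_cast
      ring
    rw [this, map_smul, smul_eq_mul]
    have : cc f 1 = f zet := by unfold cc; rw [pow_one]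
    rw [this]
    field_simp
  have e4 : f (Complex.exp (-Complex.I * ((4 * π / 3 : ℝ) : ℂ)) / ((ρ * (ρ - 1) : ℝ) : ℂ))
      * (ρ * (ρ - 1)) = cc f 2 := by
    have : Complex.exp (-Complex.I * ((4 * π / 3 : ℝ) : ℂ)) / ((ρ * (ρ - 1) : ℝ) : ℂ)
        = (1 / (ρ * (ρ - 1)) : ℝ) • zet ^ 2 := by
      rw [Complex.real_smul, zet_sq]
      push_cast
      ring
    rw [this, map_smul, smul_eq_mul]
    show 1 / (ρ * (ρ - 1)) * cc f 2 * (ρ * (ρ - 1)) = cc f 2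
    field_simp
  have e3 : f (Complex.exp (-Complex.I * ((2 * π / 3 : ℝ) : ℂ)) / (ρ : ℂ) +
        Complex.exp (-Complex.I * ((4 * π / 3 : ℝ) : ℂ)) / ((ρ * (ρ - 1) : ℝ) : ℂ))
      * (ρ * (ρ - 1)) = (ρ - 1) * cc f 1 + cc f 2 := by
    have h1 : Complex.exp (-Complex.I * ((2 * π / 3 : ℝ) : ℂ)) / (ρ : ℂ)
        = (1 / ρ : ℝ) • zet := by
      rw [Complex.real_smul, zet]
      push_cast
      ring
    have h2 : Complex.exp (-Complex.I * ((4 * π / 3 : ℝ) : ℂ)) / ((ρ * (ρ - 1) : ℝ) : ℂ)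
        = (1 / (ρ * (ρ - 1)) : ℝ) • zet ^ 2 := by
      rw [Complex.real_smul, zet_sq]
      push_cast
      ring
    rw [h1, h2, map_add, map_smul, map_smul, smul_eq_mul, smul_eq_mul]
    show (1 / ρ * f zet + 1 / (ρ * (ρ - 1)) * cc f 2) * (ρ * (ρ - 1))
      = (ρ - 1) * cc f 1 + cc f 2
    have : cc f 1 = f zet := by unfold cc; rw [pow_one]
    rw [this]
    field_simp
  -- NN at 0 is bounded by t * (ρ (ρ-1))
  have hNN0 : NN ρ f 0 < t * (ρ * (ρ - 1)) := by
    apply max_lt (max_lt ?_ ?_) (max_lt ?_ ?_)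
    · rw [← e1]; exact mul_lt_mul_of_pos_right hm1 hd
    · rw [show (0:ℕ)+1 = 1 from rfl, ← e2]; exact mul_lt_mul_of_pos_right hm2 hd
    · rw [show (0:ℕ)+1 = 1 from rfl, show (0:ℕ)+2 = 2 from rfl, ← e3]
      exact mul_lt_mul_of_pos_right hm3 hd
    · rw [show (0:ℕ)+2 = 2 from rfl, ← e4]; exact mul_lt_mul_of_pos_right hm4 hd
  -- rewrite z as a tsum over powers of zet
  have hF : ∀ j : ℕ, ((u (j + 1) / ρ ^ (j + 1) : ℝ) : ℂ) *
      Complex.exp (-Complex.I * ((2 * π / 3 *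
        ∑ n ∈ Finset.range (j + 1), v (n + 1) : ℝ) : ℂ))
      = (u (j + 1) / ρ ^ (j + 1) : ℝ) • zet ^ (KK v (j+1)) := by
    intro j
    have hsum : (∑ n ∈ Finset.range (j + 1), v (n + 1)) = ((KK v (j+1) : ℕ) : ℝ) := by
      rw [KK]
      push_cast
      exact Finset.sum_congr rfl fun n _ => v_eq_wNat hv (n+1)
    rw [hsum, exp_omega_nat, Complex.real_smul]
  -- summability
  have hgeo : Summable (fun j : ℕ => (ρ⁻¹ : ℝ) ^ (j+1)) := by
    have : Summable (fun j : ℕ => (ρ⁻¹ : ℝ) ^ j) :=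
      summable_geometric_of_lt_one (by positivity) (by
        rw [inv_lt_one_iff₀]; right; exact hρ)
    exact this.comp_injective (add_left_injective 1)
  have hub : ∀ j : ℕ, |u (j+1) / ρ ^ (j+1)| ≤ (ρ⁻¹:ℝ) ^ (j+1) := by
    intro j
    rw [abs_div, abs_of_nonneg (by positivity : (0:ℝ) ≤ ρ ^ (j+1)), inv_pow]
    rw [div_le_iff₀ (by positivity)]
    rw [inv_mul_cancel₀ (by positivity : (ρ:ℝ)^(j+1) ≠ 0)]
    rcases hu (j+1) with h | h <;> simp [h]
  have hFsummable : Summable (fun j : ℕ =>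
      (u (j + 1) / ρ ^ (j + 1) : ℝ) • zet ^ (KK v (j+1))) := by
    apply Summable.of_norm_bounded hgeo
    intro j
    rw [norm_smul, norm_pow, norm_zet, one_pow, mul_one, Real.norm_eq_abs]
    exact hub j
  have hgsummable : Summable (fun j : ℕ => u (j+1) / ρ ^ (j+1) * cc f (KK v (j+1))) := by
    apply Summable.of_norm_bounded (hgeo.mul_left ‖f‖)
    intro j
    rw [Real.norm_eq_abs, abs_mul]
    calc |u (j+1) / ρ ^ (j+1)| * |cc f (KK v (j+1))|
        ≤ (ρ⁻¹:ℝ)^(j+1) * ‖f‖ := by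
          apply mul_le_mul (hub j) (cc_abs f _) (abs_nonneg _) (by positivity)
      _ = ‖f‖ * (ρ⁻¹:ℝ)^(j+1) := by ring
  -- f z equals the tsum of g
  have hfz : f z = ∑' j : ℕ, u (j+1) / ρ ^ (j+1) * cc f (KK v (j+1)) := by
    rw [hzeq, tsum_congr hF, f.map_tsum hFsummable]
    apply tsum_congr
    intro j
    rw [map_smul, smul_eq_mul]
    rfl
  -- partial sums bound
  have hpartial : ∀ n : ℕ,
      (∑ j ∈ Finset.range n, u (j+1) / ρ ^ (j+1) * cc f (KK v (j+1))) * (ρ * (ρ - 1))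
        ≤ NN ρ f 0 - (ρ⁻¹)^n * NN ρ f (KK v n) := by
    intro n
    induction n with
    | zero => simp [KK_zero]
    | succ n ih =>
      rw [Finset.sum_range_succ, add_mul]
      have hKor : KK v (n+1) = KK v n ∨ KK v (n+1) = KK v n + 1 := by
        rcases wNat_01 v (n+1) with h | h
        · left; rw [KK_succ, h]; omega
        · right; rw [KK_succ, h]
      have hstep := NN_step f hρ (KK v n) (KK v (n+1)) hKor (u (n+1)) (hu (n+1))
      have hmul := mul_le_mul_of_nonneg_left hstep
        (by positivity : (0:ℝ) ≤ (ρ⁻¹)^(n+1))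
      have hpow : (ρ⁻¹:ℝ)^(n+1) * (ρ * NN ρ f (KK v n)) = (ρ⁻¹)^n * NN ρ f (KK v n) := by
        rw [pow_succ]
        field_simp
      have hgn : u (n+1) / ρ ^ (n+1) * cc f (KK v (n+1)) * (ρ * (ρ - 1))
          = (ρ⁻¹:ℝ)^(n+1) * (u (n+1) * cc f (KK v (n+1)) * (ρ * (ρ - 1))) := by
        rw [div_eq_mul_inv, inv_pow]
        ring
      rw [mul_add] at hmul
      rw [hpow] at hmul
      rw [hgn]
      linarith
  have hbound : ∀ n : ℕ,
      (∑ j ∈ Finset.range n, u (j+1) / ρ ^ (j+1) * cc f (KK v (j+1)))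
        ≤ NN ρ f 0 / (ρ * (ρ - 1)) := by
    intro n
    rw [le_div_iff₀ hd]
    have h2 : (0:ℝ) ≤ (ρ⁻¹)^n * NN ρ f (KK v n) :=
      mul_nonneg (by positivity) (NN_nonneg f hρ _)
    linarith [hpartial n]
  have hfzle : f z ≤ NN ρ f 0 / (ρ * (ρ - 1)) := by
    rw [hfz]
    exact le_of_tendsto' hgsummable.hasSum.tendsto_sum_nat hbound
  have : f z < t := by
    have := (div_lt_iff₀ hd).2 hNN0
    calc f z ≤ NN ρ f 0 / (ρ * (ρ - 1)) := hfzle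
      _ < t := by
        rw [div_lt_iff₀ hd]
        exact hNN0
  linarith
end main

theorem convexHull_Rinf (ρ : ℝ) (hρ : 1 < ρ) :
    convexHull ℝ (Rinf ρ (2 * π / 3)) =
      convexHull ℝ
        ({((1 / (ρ - 1) : ℝ) : ℂ),
          Complex.exp (-Complex.I * ((2 * π / 3 : ℝ) : ℂ)) / ((ρ - 1 : ℝ) : ℂ),
          Complex.exp (-Complex.I * ((2 * π / 3 : ℝ) : ℂ)) / (ρ : ℂ) +
            Complex.exp (-Complex.I * ((4 * π / 3 : ℝ) : ℂ)) / ((ρ * (ρ - 1) : ℝ) : ℂ),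
          Complex.exp (-Complex.I * ((4 * π / 3 : ℝ) : ℂ)) / ((ρ * (ρ - 1) : ℝ) : ℂ)} : Set ℂ) := by
  apply Set.Subset.antisymm
  · exact convexHull_min (subset_hull hρ) (convex_convexHull ℝ _)
  · apply convexHull_min ?_ (convex_convexHull ℝ _)
    rintro x (rfl | rfl | rfl | rfl)
    · exact subset_convexHull ℝ _ (mem_v1 hρ)
    · exact subset_convexHull ℝ _ (mem_v2 hρ)
    · exact subset_convexHull ℝ _ (mem_v3 hρ)
    · exact subset_convexHull ℝ _ (mem_v4 hρ)
end

section
/- If ω = 2π/3 (so consecutive phalanxes form angle π/3) and ρ ≥ 2, then no configuration of the finger is self-intersecting: for any finite binary control sequences, no phalanx segment [x_{k}, x_{k+1}] with k ≥ 1 (and x_{k+1} ≠ x_k) intersects the interior of the first phalanx segment [0, 1/ρ]. -/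
open Real

lemma aux_im (r θ : ℝ) : ((r:ℂ) * Complex.exp (-Complex.I * (θ:ℂ))).im = -(r * Real.sin θ) := by
  have h : -Complex.I * (θ:ℂ) = ((-θ : ℝ):ℂ) * Complex.I := by push_cast; ring
  rw [Complex.mul_im, h, Complex.exp_ofReal_mul_I_im, Complex.exp_ofReal_mul_I_re,
    Complex.ofReal_re, Complex.ofReal_im, Real.sin_neg]
  ring

lemma aux_re (r θ : ℝ) : ((r:ℂ) * Complex.exp (-Complex.I * (θ:ℂ))).re = r * Real.cos θ := by
  have h : -Complex.I * (θ:ℂ) = ((-θ : ℝ):ℂ) * Complex.I := by push_cast; ring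
  rw [Complex.mul_re, h, Complex.exp_ofReal_mul_I_im, Complex.exp_ofReal_mul_I_re,
    Complex.ofReal_re, Complex.ofReal_im, Real.cos_neg]
  ring

lemma trig_cases (v : ℕ → ℝ) (hv : ∀ j, v j = 0 ∨ v j = 1) (hv1 : v 1 = 0) (j : ℕ) :
    (Real.sin ((2*π/3) * ∑ n ∈ Finset.range (j+1), v (n+1)) = 0 ∧
      Real.cos ((2*π/3) * ∑ n ∈ Finset.range (j+1), v (n+1)) = 1) ∨
    (Real.sin ((2*π/3) * ∑ n ∈ Finset.range (j+1), v (n+1)) = Real.sqrt 3 / 2 ∧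
      Real.cos ((2*π/3) * ∑ n ∈ Finset.range (j+1), v (n+1)) = -(1/2)) ∨
    (Real.sin ((2*π/3) * ∑ n ∈ Finset.range (j+1), v (n+1)) = -(Real.sqrt 3 / 2) ∧
      Real.cos ((2*π/3) * ∑ n ∈ Finset.range (j+1), v (n+1)) = -(1/2)) := by
  have hs : Real.sin (2*π/3) = Real.sqrt 3 / 2 := by
    have h23 : 2*π/3 = π - π/3 := by ring
    rw [h23, Real.sin_pi_sub, Real.sin_pi_div_three]
  have hc : Real.cos (2*π/3) = -(1/2) := by
    have h23 : 2*π/3 = π - π/3 := by ring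
    rw [h23, Real.cos_pi_sub, Real.cos_pi_div_three]
  induction j with
  | zero => left; simp [hv1]
  | succ j ih =>
      rw [Finset.sum_range_succ]
      rcases hv (j+2) with h | h
      · rw [h, add_zero]; exact ih
      · rw [h, mul_add, mul_one, Real.sin_add, Real.cos_add, hs, hc]
        have h3 : Real.sqrt 3 * Real.sqrt 3 = 3 := Real.mul_self_sqrt (by norm_num)
        rcases ih with ⟨h1, h2⟩ | ⟨h1, h2⟩ | ⟨h1, h2⟩
        · right; left; rw [h1, h2]; constructor <;> ring
        · right; right; rw [h1, h2]
          constructor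
          · field_simp; nlinarith [h3]
          · field_simp; nlinarith [h3]
        · left; rw [h1, h2]
          constructor
          · ring
          · field_simp; nlinarith [h3]

lemma geom_bound (ρ : ℝ) (hρ : 2 ≤ ρ) (a b : ℕ) (hab : a + 1 ≤ b) :
    ∑ j ∈ Finset.Ico (a+1) b, (1/ρ)^(j+1) < (1/ρ)^(a+1) := by
  have hρ0 : (0:ℝ) < ρ := by linarith
  have hr0 : (0:ℝ) < 1/ρ := by positivity
  have hrh : (1:ℝ)/ρ ≤ 1/2 := by
    rw [div_le_div_iff₀ hρ0 (by norm_num)]; linarith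
  obtain ⟨m, rfl⟩ : ∃ m, b = (a+1) + m := ⟨b - (a+1), by omega⟩
  rw [Finset.sum_Ico_eq_sum_range]
  simp only [add_tsub_cancel_left]
  have hstep : ∀ i ∈ Finset.range m, (1/ρ)^(a+1+i+1) = (1/ρ)^(a+2) * (1/ρ)^i := by
    intro i _; rw [← pow_add]; ring_nf
  rw [Finset.sum_congr rfl hstep, ← Finset.mul_sum]
  have hsum : ∑ i ∈ Finset.range m, (1/ρ)^i < 2 := by
    calc ∑ i ∈ Finset.range m, (1/ρ)^i ≤ ∑ i ∈ Finset.range m, (1/2:ℝ)^i := by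
          apply Finset.sum_le_sum
          intro i _
          exact pow_le_pow_left₀ (le_of_lt hr0) hrh i
      _ < 2 := by
          have := geom_sum_eq (by norm_num : (1/2:ℝ) ≠ 1) m
          rw [this]
          have : (0:ℝ) < (1/2)^m := by positivity
          rw [div_lt_iff_of_neg (by norm_num : (1/2:ℝ) - 1 < 0)]
          linarith
  calc (1/ρ)^(a+2) * ∑ i ∈ Finset.range m, (1/ρ)^i < (1/ρ)^(a+2) * ρ := by
        apply mul_lt_mul_of_pos_left _ (by positivity)
        linarith
    _ = (1/ρ)^(a+1) := by
        rw [pow_succ]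
        field_simp

theorem no_self_intersection (ρ : ℝ) (hρ : 2 ≤ ρ)
    (u v : ℕ → ℝ) (hu : ∀ j, u j = 0 ∨ u j = 1) (hv : ∀ j, v j = 0 ∨ v j = 1)
    (hu1 : u 1 = 1) (hv1 : v 1 = 0)
    (x : ℕ → ℂ)
    (hx : ∀ k, x k = ∑ j ∈ Finset.range k,
      ((u (j + 1) / ρ ^ (j + 1) : ℝ) : ℂ) *
        Complex.exp (-Complex.I * (((2 * π / 3) * ∑ n ∈ Finset.range (j + 1), v (n + 1) : ℝ) : ℂ)))
    (k : ℕ) (hk : 1 ≤ k) (hne : x (k + 1) ≠ x k) :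
    segment ℝ (x k) (x (k + 1)) ∩ openSegment ℝ (0 : ℂ) ((1 / ρ : ℝ) : ℂ) = ∅ := by
  have hρ0 : (0:ℝ) < ρ := by linarith
  set θ : ℕ → ℝ := fun j => (2 * π / 3) * ∑ n ∈ Finset.range (j + 1), v (n + 1) with hθ
  set w : ℕ → ℂ := fun j => ((u (j + 1) / ρ ^ (j + 1) : ℝ) : ℂ) *
      Complex.exp (-Complex.I * ((θ j : ℝ) : ℂ)) with hw
  have hxw : ∀ m, x m = ∑ j ∈ Finset.range m, w j := fun m => hx m
  -- basic facts about steps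
  have him : ∀ j, (w j).im = -(u (j+1) / ρ ^ (j+1) * Real.sin (θ j)) := fun j => aux_im _ _
  have hre : ∀ j, (w j).re = u (j+1) / ρ ^ (j+1) * Real.cos (θ j) := fun j => aux_re _ _
  have hrnn : ∀ j, 0 ≤ u (j+1) / ρ ^ (j+1) := by
    intro j
    rcases hu (j+1) with h | h <;> rw [h] <;> positivity
  have hpow1 : ∀ m : ℕ, ((1:ℝ)/ρ)^m = 1 / ρ^m := by
    intro m; rw [div_pow, one_pow]
  have hrle : ∀ j, u (j+1) / ρ ^ (j+1) ≤ (1/ρ)^(j+1) := by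
    intro j
    rw [hpow1]
    rcases hu (j+1) with h | h <;> rw [h]
    rw [zero_div]; positivity
  have hs3 : (0:ℝ) < Real.sqrt 3 := Real.sqrt_pos.mpr (by norm_num)
  have hsinle : ∀ j, |Real.sin (θ j)| ≤ Real.sqrt 3 / 2 := by
    intro j
    rcases trig_cases v hv hv1 j with ⟨h1, _⟩ | ⟨h1, _⟩ | ⟨h1, _⟩ <;>
      rw [hθ] <;> simp only [] <;> rw [h1]
    · simp; positivity
    · rw [abs_of_nonneg (by positivity)]
    · rw [abs_neg, abs_of_nonneg (by positivity)]
  have hb : ∀ j, |(w j).im| ≤ Real.sqrt 3 / 2 * (1/ρ)^(j+1) := by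
    intro j
    rw [him j, abs_neg, abs_mul, abs_of_nonneg (hrnn j)]
    calc u (j+1) / ρ ^ (j+1) * |Real.sin (θ j)| ≤ (1/ρ)^(j+1) * (Real.sqrt 3 / 2) :=
          mul_le_mul (hrle j) (hsinle j) (abs_nonneg _) (by positivity)
      _ = Real.sqrt 3 / 2 * (1/ρ)^(j+1) := by ring
  -- horizontal steps have nonnegative real part
  have hreh : ∀ j, (w j).im = 0 → 0 ≤ (w j).re := by
    intro j hj
    rw [hre j]
    rcases hu (j+1) with h | h
    · rw [h]; simp
    · rw [him j, h] at hj
      have hsin : Real.sin (θ j) = 0 := by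
        have h0 : (1:ℝ)/ρ^(j+1) ≠ 0 := by positivity
        rcases mul_eq_zero.mp (neg_eq_zero.mp hj) with h' | h'
        · exact absurd h' h0
        · exact h'
      rcases trig_cases v hv hv1 j with ⟨h1, h2⟩ | ⟨h1, h2⟩ | ⟨h1, h2⟩
      · rw [hθ] at *; simp only [] at *; rw [h2, h]; positivity
      · rw [hθ] at *; simp only [] at *; rw [h1] at hsin
        exact absurd hsin (by positivity)
      · rw [hθ] at *; simp only [] at *; rw [h1] at hsin
        have : Real.sqrt 3 / 2 = 0 := by linarith
        exact absurd this (by positivity)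
  -- the first step
  have hw0im : (w 0).im = 0 := by
    rw [him 0]
    have : θ 0 = 0 := by rw [hθ]; simp [hv1]
    rw [this, Real.sin_zero]; ring
  have hw0re : (w 0).re = 1/ρ := by
    rw [hre 0]
    have : θ 0 = 0 := by rw [hθ]; simp [hv1]
    rw [this, Real.cos_zero, hu1, pow_one]; ring
  -- extract the point
  rw [Set.eq_empty_iff_forall_notMem]
  rintro z ⟨hz1, hz2⟩
  rw [openSegment_eq_image] at hz2
  obtain ⟨t, ⟨ht0, ht1⟩, htz⟩ := hz2
  simp only [smul_zero, zero_add, Complex.real_smul] at htz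
  have hzim : z.im = 0 := by
    rw [← htz]
    simp [Complex.mul_im]
  have hzre1 : z.re < 1/ρ := by
    rw [← htz]
    simp only [Complex.mul_re, Complex.ofReal_re, Complex.ofReal_im, mul_zero, zero_mul, sub_zero]
    have : (0:ℝ) < 1/ρ := by positivity
    nlinarith
  have hzre0 : 0 < z.re := by
    rw [← htz]
    simp only [Complex.mul_re, Complex.ofReal_re, Complex.ofReal_im, mul_zero, zero_mul, sub_zero]
    positivity
  rw [segment_eq_image] at hz1
  obtain ⟨s, ⟨hs0, hs1⟩, hsz⟩ := hz1
  have hxs : x (k+1) = x k + w k := by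
    rw [hxw, hxw, Finset.sum_range_succ]
  have hzeq : z = x k + (s:ℂ) * w k := by
    rw [← hsz, hxs]
    simp only [Complex.real_smul]
    push_cast
    ring
  have hzim' : (x k).im + s * (w k).im = 0 := by
    rw [hzeq] at hzim
    simpa [Complex.add_im, Complex.mul_im] using hzim
  have hzre' : z.re = (x k).re + s * (w k).re := by
    rw [hzeq]
    simp [Complex.add_re, Complex.mul_re]
  have hxkim : (x k).im = ∑ j ∈ Finset.range k, (w j).im := by
    rw [hxw]; exact Complex.im_sum _ _
  have hxkre : (x k).re = ∑ j ∈ Finset.range k, (w j).re := by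
    rw [hxw]; exact Complex.re_sum _ _
  by_cases hC : ∀ j, 1 ≤ j → j < k → (w j).im = 0
  · -- all inner steps horizontal
    have hxkim0 : (x k).im = 0 := by
      rw [hxkim]
      apply Finset.sum_eq_zero
      intro j hj
      rw [Finset.mem_range] at hj
      rcases Nat.eq_zero_or_pos j with h | h
      · rw [h]; exact hw0im
      · exact hC j h hj
    have hxkre' : 1/ρ ≤ (x k).re := by
      rw [hxkre, ← Finset.sum_range_add_sum_Ico _ hk]
      have h1 : ∑ j ∈ Finset.range 1, (w j).re = 1/ρ := by
        rw [Finset.sum_range_one, hw0re]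
      rw [h1]
      have : 0 ≤ ∑ j ∈ Finset.Ico 1 k, (w j).re := by
        apply Finset.sum_nonneg
        intro j hj
        rw [Finset.mem_Ico] at hj
        exact hreh j (hC j hj.1 hj.2)
      linarith
    -- now z.re ≥ 1/ρ
    rw [hxkim0, zero_add] at hzim'
    have hlast : 0 ≤ s * (w k).re := by
      rcases mul_eq_zero.mp hzim' with h | h
      · rw [h, zero_mul]
      · exact mul_nonneg hs0 (hreh k h)
    rw [hzre'] at hzre1
    linarith
  · -- there is a first vertical step
    push_neg at hC
    have hP : ∃ j, 1 ≤ j ∧ j < k ∧ (w j).im ≠ 0 := hC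
    set j0 := Nat.find hP with hj0def
    obtain ⟨hj01, hj0k, hj0ne⟩ := Nat.find_spec hP
    have hmin : ∀ j, 1 ≤ j → j < j0 → (w j).im = 0 := by
      intro j h1 h2
      by_contra hne'
      exact Nat.find_min hP h2 ⟨h1, lt_trans h2 hj0k, hne'⟩
    -- magnitude of the first vertical step
    have hu0 : u (j0+1) = 1 := by
      rcases hu (j0+1) with h | h
      · exfalso; apply hj0ne; rw [him, h]; ring
      · exact h
    have hj0im : |(w j0).im| = Real.sqrt 3 / 2 * (1/ρ)^(j0+1) := by
      rw [him j0, hu0]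
      have hsin : Real.sin (θ j0) = Real.sqrt 3 / 2 ∨ Real.sin (θ j0) = -(Real.sqrt 3 / 2) := by
        rcases trig_cases v hv hv1 j0 with ⟨h1, _⟩ | ⟨h1, _⟩ | ⟨h1, _⟩
        · exfalso; apply hj0ne; rw [him j0]
          rw [hθ]; simp only []; rw [h1]; ring
        · left; rw [hθ]; simp only []; exact h1
        · right; rw [hθ]; simp only []; exact h1
      have hpow : (1:ℝ) / ρ ^ (j0+1) = (1/ρ)^(j0+1) := (hpow1 (j0+1)).symm
      rcases hsin with h | h <;> rw [h] <;>
        rw [abs_neg, abs_mul, abs_of_nonneg (by positivity : (0:ℝ) ≤ 1 / ρ ^ (j0+1))]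
      · rw [abs_of_nonneg (by positivity), hpow]; ring
      · rw [abs_neg, abs_of_nonneg (by positivity), hpow]; ring
    -- split the sum
    have hsplit : (w j0).im = -(∑ j ∈ Finset.Ico (j0+1) k, (w j).im + s * (w k).im) := by
      have h1 : ∑ j ∈ Finset.range k, (w j).im
          = ∑ j ∈ Finset.range (j0+1), (w j).im + ∑ j ∈ Finset.Ico (j0+1) k, (w j).im := by
        rw [Finset.sum_range_add_sum_Ico _ (by omega : j0 + 1 ≤ k)]
      have h2 : ∑ j ∈ Finset.range (j0+1), (w j).im = (w j0).im := by
        rw [Finset.sum_range_succ]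
        have : ∑ j ∈ Finset.range j0, (w j).im = 0 := by
          apply Finset.sum_eq_zero
          intro j hj
          rw [Finset.mem_range] at hj
          rcases Nat.eq_zero_or_pos j with h | h
          · rw [h]; exact hw0im
          · exact hmin j h hj
        rw [this, zero_add]
      rw [hxkim, h1, h2] at hzim'
      linarith
    -- bound
    have hbound : |(w j0).im| ≤ Real.sqrt 3 / 2 * ∑ j ∈ Finset.Ico (j0+1) (k+1), (1/ρ)^(j+1) := by
      rw [hsplit, abs_neg]
      calc |∑ j ∈ Finset.Ico (j0+1) k, (w j).im + s * (w k).im|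
          ≤ |∑ j ∈ Finset.Ico (j0+1) k, (w j).im| + |s * (w k).im| := abs_add_le _ _
        _ ≤ (∑ j ∈ Finset.Ico (j0+1) k, |(w j).im|) + |(w k).im| := by
            apply add_le_add (Finset.abs_sum_le_sum_abs _ _)
            rw [abs_mul, abs_of_nonneg hs0]
            exact mul_le_of_le_one_left (abs_nonneg _) hs1
        _ ≤ (∑ j ∈ Finset.Ico (j0+1) k, Real.sqrt 3 / 2 * (1/ρ)^(j+1))
              + Real.sqrt 3 / 2 * (1/ρ)^(k+1) :=
            add_le_add (Finset.sum_le_sum fun j _ => hb j) (hb k)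
        _ = Real.sqrt 3 / 2 * ∑ j ∈ Finset.Ico (j0+1) (k+1), (1/ρ)^(j+1) := by
            rw [Finset.sum_Ico_succ_top (by omega : j0 + 1 ≤ k), ← Finset.mul_sum]
            ring
    have hgeo := geom_bound ρ hρ j0 (k+1) (by omega)
    rw [hj0im] at hbound
    have : Real.sqrt 3 / 2 * ∑ j ∈ Finset.Ico (j0+1) (k+1), (1/ρ)^(j+1)
        < Real.sqrt 3 / 2 * (1/ρ)^(j0+1) := by
      apply mul_lt_mul_of_pos_left hgeo (by positivity)
    linarith
end

section
/- If ω = 2π/3 and 1 < ρ < 2, then there exists a self-intersecting configuration: for all sufficiently large J, the full-extension configuration with controls u_j = 1 for all j ≤ J, v₁ = 0, v₂ = v₃ = 1, and v_j = 0 for 4 ≤ j ≤ J, has some later phalanx segment intersecting the first phalanx segment [0, 1/ρ]. -/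
open Real

theorem self_intersecting_configuration (ρ : ℝ) (h1 : 1 < ρ) (h2 : ρ < 2)
    (x : ℕ → ℂ)
    (hx : ∀ k, x k = ∑ j ∈ Finset.range k,
      ((1 / ρ ^ (j + 1) : ℝ) : ℂ) *
        Complex.exp (-Complex.I *
          (((2 * π / 3) * ∑ n ∈ Finset.range (j + 1),
            (if n + 1 = 2 ∨ n + 1 = 3 then (1 : ℝ) else 0) : ℝ) : ℂ))) :
    ∃ J₀ : ℕ, ∀ J ≥ J₀, ∃ k, 2 ≤ k ∧ k + 1 ≤ J ∧
      (segment ℝ (x k) (x (k + 1)) ∩ segment ℝ (0 : ℂ) ((1 / ρ : ℝ) : ℂ)).Nonempty := by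
  classical
  have hρ0 : (0:ℝ) < ρ := by linarith
  set a : ℝ := 1/ρ with ha_def
  have ha0 : 0 < a := by positivity
  have ha1 : a < 1 := by rw [ha_def, div_lt_one hρ0]; linarith
  have hahalf : 1/2 < a := by rw [ha_def, div_lt_div_iff₀ (by norm_num) hρ0]; linarith
  have hapow : ∀ k : ℕ, (1/ρ^k : ℝ) = a^k := by
    intro k; rw [ha_def, div_pow, one_pow]
  -- value of the inner sum for j ≥ 2
  have hS : ∀ j : ℕ, 2 ≤ j → (∑ n ∈ Finset.range (j + 1),
      (if n + 1 = 2 ∨ n + 1 = 3 then (1 : ℝ) else 0)) = 2 := by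
    intro j hj
    induction j with
    | zero => omega
    | succ m ih =>
      rcases Nat.lt_or_ge m 2 with hm | hm
      · interval_cases m
        · omega
        · rw [Finset.sum_range_succ, Finset.sum_range_succ, Finset.sum_range_one]
          norm_num
      · rw [Finset.sum_range_succ, ih hm]
        have hne : ¬(m + 1 + 1 = 2 ∨ m + 1 + 1 = 3) := by omega
        rw [if_neg hne, add_zero]
  set d : ℂ := Complex.exp (-Complex.I * (((2 * π / 3) * 2 : ℝ) : ℂ)) with hd_def
  set e2 : ℂ := Complex.exp (-Complex.I * (((2 * π / 3) * 1 : ℝ) : ℂ)) with he2_def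
  -- step lemma
  have hdiff : ∀ k, 2 ≤ k → x (k+1) = x k + ((a^(k+1) : ℝ):ℂ) * d := by
    intro k hk
    rw [hx (k+1), hx k, Finset.sum_range_succ, hS k hk, hapow]
  -- x 2
  have hx2 : x 2 = ((a : ℝ):ℂ) + ((a^2 : ℝ):ℂ) * e2 := by
    have hS0 : (∑ n ∈ Finset.range 1,
        (if n + 1 = 2 ∨ n + 1 = 3 then (1 : ℝ) else 0)) = 0 := by
      rw [Finset.sum_range_one]; norm_num
    have hS1 : (∑ n ∈ Finset.range 2,
        (if n + 1 = 2 ∨ n + 1 = 3 then (1 : ℝ) else 0)) = 1 := by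
      rw [Finset.sum_range_succ, Finset.sum_range_one]; norm_num
    rw [hx 2, Finset.sum_range_succ, Finset.sum_range_succ, Finset.sum_range_zero,
      hS0, hS1, hapow, hapow]
    norm_num [he2_def]
  -- cumulative tail length
  set t : ℕ → ℝ := fun k => ∑ j ∈ Finset.Ico 2 k, a^(j+1) with ht_def
  have ht2 : t 2 = 0 := by simp [ht_def]
  have htsucc : ∀ k, 2 ≤ k → t (k+1) = t k + a^(k+1) := by
    intro k hk
    simp only [ht_def]
    rw [Finset.sum_Ico_succ_top hk]
  have hxk : ∀ k, 2 ≤ k → x k = x 2 + ((t k : ℝ):ℂ) * d := by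
    intro k hk
    induction k with
    | zero => omega
    | succ m ih =>
      rcases Nat.lt_or_ge m 2 with hm | hm
      · interval_cases m
        · omega
        · simp [ht2]
      · rw [hdiff m hm, ih hm, htsucc m hm]
        push_cast
        ring
  -- key identity e2 + d = -1
  have hed : e2 + d = -1 := by
    have h2d : d = Complex.exp (((2*π/3 : ℝ):ℂ) * Complex.I) := by
      have harg : (-Complex.I * (((2 * π / 3) * 2 : ℝ) : ℂ)) =
          ((2*π/3:ℝ):ℂ) * Complex.I + -(2 * (π:ℂ) * Complex.I) := by
        push_cast; ring
      rw [hd_def, harg, Complex.exp_add, Complex.exp_neg, Complex.exp_two_pi_mul_I,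
        inv_one, mul_one]
    have h2e : e2 = Complex.exp (((-(2*π/3) : ℝ):ℂ) * Complex.I) := by
      rw [he2_def]; congr 1; push_cast; ring
    have hc : Real.cos (2*π/3) = -(1/2) := by
      rw [show (2*π/3:ℝ) = π - π/3 by ring, Real.cos_pi_sub, Real.cos_pi_div_three]
    rw [h2d, h2e, Complex.exp_mul_I, Complex.exp_mul_I,
      ← Complex.ofReal_cos, ← Complex.ofReal_cos, ← Complex.ofReal_sin, ← Complex.ofReal_sin,
      Real.cos_neg, Real.sin_neg, hc]
    push_cast
    ring
  -- the intersection point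
  have hp : ((a - a^2 : ℝ) : ℂ) = x 2 + ((a^2 : ℝ):ℂ) * d := by
    rw [hx2]
    push_cast
    linear_combination (-(a:ℂ)^2) * hed
  -- membership in the base segment
  have hbase : ((a - a^2 : ℝ):ℂ) ∈ segment ℝ (0:ℂ) ((a : ℝ):ℂ) := by
    rw [segment_eq_image' ℝ]
    refine ⟨1 - a, ⟨by linarith, by linarith⟩, ?_⟩
    dsimp only
    rw [Complex.real_smul]
    push_cast
    ring
  -- geometric sum formula
  have hformula : ∀ k, 2 ≤ k → t k = (a^3 - a^(k+1))/(1-a) := by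
    intro k hk
    simp only [ht_def]
    calc ∑ j ∈ Finset.Ico 2 k, a^(j+1) = ∑ j ∈ Finset.Ico 2 k, a * a^j := by
          exact Finset.sum_congr rfl fun j _ => by ring
      _ = a * ∑ j ∈ Finset.Ico 2 k, a^j := by rw [Finset.mul_sum]
      _ = a * ((a^k - a^2)/(a-1)) := by rw [geom_sum_Ico (by linarith : a ≠ 1) hk]
      _ = (a^3 - a^(k+1))/(1-a) := by
          have hne1 : a - 1 ≠ 0 := by linarith
          have hne2 : (1:ℝ) - a ≠ 0 := by linarith
          field_simp
          ring
  -- existence of a far-enough index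
  obtain ⟨n, hn⟩ := exists_pow_lt_of_lt_one (show (0:ℝ) < 2*a-1 by linarith) ha1
  have hPex : ∃ m : ℕ, a^2 ≤ t (m+3) := by
    refine ⟨n, ?_⟩
    rw [hformula (n+3) (by omega), le_div_iff₀ (by linarith : (0:ℝ) < 1 - a)]
    have hsq1 : a^2 ≤ 1 := by nlinarith
    have e1 : a^(n+3+1) = a^n * a^2 * a^2 := by ring
    have e2' : a^n * a^2 * a^2 ≤ a^n * a^2 * 1 :=
      mul_le_mul_of_nonneg_left hsq1 (by positivity)
    have e3 : a^n * a^2 < (2*a-1) * a^2 :=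
      mul_lt_mul_of_pos_right hn (pow_pos ha0 2)
    nlinarith
  set m₀ := Nat.find hPex with hm₀_def
  have hspec : a^2 ≤ t (m₀ + 3) := Nat.find_spec hPex
  have hkle : t (m₀ + 2) ≤ a^2 := by
    rcases Nat.eq_zero_or_pos m₀ with h0 | hpos
    · rw [h0, show (0+2) = 2 from rfl, ht2]; positivity
    · obtain ⟨m, hm⟩ := Nat.exists_eq_succ_of_ne_zero hpos.ne'
      have hmin := Nat.find_min hPex (show m < m₀ by omega)
      push_neg at hmin
      have : m₀ + 2 = m + 3 := by omega
      rw [this]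
      exact hmin.le
  -- assemble
  refine ⟨m₀ + 3, fun J hJ => ⟨m₀ + 2, by omega, by omega, ?_⟩⟩
  refine ⟨((a - a^2 : ℝ):ℂ), ?_, hbase⟩
  set k := m₀ + 2 with hk_def
  have hk2 : 2 ≤ k := by omega
  have hts := htsucc k hk2
  have hspec' : a^2 ≤ t (k + 1) := by rw [show k + 1 = m₀ + 3 by omega]; exact hspec
  rw [segment_eq_image' ℝ]
  refine ⟨(a^2 - t k)/a^(k+1), ⟨?_, ?_⟩, ?_⟩
  · exact div_nonneg (by linarith) (by positivity)
  · rw [div_le_one (pow_pos ha0 (k+1))]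
    linarith
  · have ha_ne : (a:ℂ) ≠ 0 := by exact_mod_cast ha0.ne'
    rw [hxk k hk2, hxk (k+1) (by omega), hts, hp]
    dsimp only
    rw [Complex.real_smul]
    push_cast
    field_simp
    ring
end
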